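/- arXiv:1408.1329 — 3 statements merged into one kernel-verified Lean document; each statement's English description precedes it below -/
import Mathlib

section
/- For integers 0 ≤ i ≤ d, the polynomial identity qbase(i, x, d)_q = Σ_{j=0}^{d} (-1)^{d-j} q^{-d(d-i) + C(d-j,2)} qbinom(d-i, d-j)_q · qbase(j, x, j)_q holds in ℚ(q)[x], where C(m,2)=m(m-1)/2. -/
open Polynomial Finset

noncomputable section

/-- The field ℚ(q) of rational functions. -/
abbrev K : Type := RatFunc ℚ

/-- The variable q of ℚ(q). -/
def qq : K := RatFunc.X

/-- The q-integer [n]_t = (t^n - 1)/(t - 1), for n ∈ ℤ. -/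
def qint (t : K) (n : ℤ) : K := (t ^ n - 1) / (t - 1)

/-- The q-factorial [n]!_t. -/
def qfact (t : K) (n : ℕ) : K := ∏ i ∈ range n, qint t (i + 1)

/-- The generalized q-binomial qbinom(m, n)_t = [m]_t [m-1]_t ⋯ [m-n+1]_t / [n]!_t. -/
def qbinom (t : K) (m : ℤ) (n : ℕ) : K := (∏ i ∈ range n, qint t (m - i)) / qfact t n

/-- The q-binomial with the vanishing convention: 0 unless 0 ≤ n ≤ m. -/
def qbinomv (t : K) (m n : ℤ) : K :=
  if 0 ≤ n ∧ n ≤ m then (∏ i ∈ range n.toNat, qint t (m - i)) / qfact t n.toNat else 0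

/-- The polynomial [n, x]_t = [n]_t + t^n x. -/
def qb (t : K) (n : ℤ) : Polynomial K := C (qint t n) + C (t ^ n) * X

/-- The polynomial qbase(m, x, n)_t = [m-n+1,x]_t ⋯ [m,x]_t / [n]!_t. -/
def qbase (t : K) (m : ℤ) (n : ℕ) : Polynomial K :=
  (∏ i ∈ range n, qb t (m - n + 1 + i)) * C (qfact t n)⁻¹

/-! ### Auxiliary lemmas -/

lemma qq_ne_zero : qq ≠ 0 := RatFunc.X_ne_zero

lemma qq_pow_ne_one (k : ℕ) (hk : k ≠ 0) : qq ^ k ≠ 1 := by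
  intro h
  have : (algebraMap ℚ[X] K) (X ^ k) = (algebraMap ℚ[X] K) 1 := by
    simpa [map_pow, RatFunc.algebraMap_X, qq] using h
  have h2 := RatFunc.algebraMap_injective ℚ this
  have := congrArg natDegree h2
  simp [natDegree_X_pow] at this
  exact hk this

lemma qq_zpow_ne_one (n : ℤ) (hn : n ≠ 0) : qq ^ n ≠ 1 := by
  rcases lt_or_gt_of_ne hn with h | h
  · intro he
    have h1 : qq ^ (-n) = 1 := by
      have : (qq ^ n) * (qq ^ (-n)) = 1 := by
        rw [← zpow_add₀ qq_ne_zero]; simp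
      rw [he, one_mul] at this; exact this
    have : qq ^ ((-n).toNat) = 1 := by
      rw [← h1, ← zpow_natCast]; congr 1; omega
    exact qq_pow_ne_one _ (by omega) this
  · intro he
    have : qq ^ (n.toNat) = 1 := by
      rw [← he, ← zpow_natCast]; congr 1; omega
    exact qq_pow_ne_one _ (by omega) this

lemma qq_sub_one_ne_zero : qq - 1 ≠ 0 := by
  intro h
  have : qq ^ (1:ℤ) = 1 := by rw [zpow_one]; linear_combination h
  exact qq_zpow_ne_one 1 one_ne_zero this

lemma qzpow_add (a b : ℤ) : qq ^ (a + b) = qq ^ a * qq ^ b := zpow_add₀ qq_ne_zero a b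

lemma qint_zero : qint qq 0 = 0 := by simp [qint]

lemma qint_add (a b : ℤ) : qint qq (a + b) = qint qq a + qq ^ a * qint qq b := by
  unfold qint
  rw [qzpow_add]
  field_simp [qq_sub_one_ne_zero]
  ring

lemma qint_ne_zero (n : ℤ) (hn : n ≠ 0) : qint qq n ≠ 0 := by
  unfold qint
  intro h
  rcases div_eq_zero_iff.mp h with h | h
  · exact qq_zpow_ne_one n hn (by linear_combination h)
  · exact qq_sub_one_ne_zero h

lemma qint_neg (z : ℤ) : qint qq (-z) = -(qq ^ (-z)) * qint qq z := by
  have h := qint_add (-z) z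
  rw [neg_add_cancel, qint_zero] at h
  linear_combination -h

lemma qfact_ne_zero (n : ℕ) : qfact qq n ≠ 0 := by
  unfold qfact
  apply Finset.prod_ne_zero_iff.mpr
  intro i _
  exact qint_ne_zero _ (by omega)

lemma qfact_succ (n : ℕ) : qfact qq (n + 1) = qfact qq n * qint qq (n + 1) := by
  unfold qfact
  rw [Finset.prod_range_succ]

lemma qbinom_zero (m : ℤ) : qbinom qq m 0 = 1 := by
  simp [qbinom, qfact]

lemma qbinom_top_zero (n : ℕ) (hn : n ≠ 0) : qbinom qq 0 n = 0 := by
  unfold qbinom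
  rw [Finset.prod_eq_zero (i := 0) (by simp [Nat.pos_of_ne_zero hn]) (by simpa using qint_zero)]
  simp

lemma qbinom_num_succ' (a : ℤ) (m : ℕ) :
    (∏ i ∈ range (m+1), qint qq (a + 1 - i)) = qint qq (a+1) * ∏ i ∈ range m, qint qq (a - i) := by
  rw [Finset.prod_range_succ', mul_comm]
  congr 1
  · norm_num
  · apply Finset.prod_congr rfl
    intro i _
    congr 1
    push_cast
    ring

lemma qbinom_absorb (a : ℤ) (m : ℕ) :
    qint qq (m + 1) * qbinom qq (a + 1) (m + 1) = qint qq (a + 1) * qbinom qq a m := by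
  unfold qbinom
  rw [qbinom_num_succ', qfact_succ]
  have h1 := qfact_ne_zero m
  have h2 : qint qq ((m:ℤ) + 1) ≠ 0 := qint_ne_zero _ (by omega)
  field_simp

lemma qbinom_pascal (a : ℤ) (m : ℕ) :
    qbinom qq (a + 1) (m + 1) = qbinom qq a (m + 1) + qq ^ (a - m) * qbinom qq a m := by
  unfold qbinom
  rw [qbinom_num_succ', qfact_succ, Finset.prod_range_succ]
  have h1 := qfact_ne_zero m
  have h2 : qint qq ((m:ℤ) + 1) ≠ 0 := qint_ne_zero _ (by omega)
  have h3 : qint qq (a + 1) = qint qq (a - m) + qq ^ (a - m) * qint qq ((m:ℤ)+1) := by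
    rw [← qint_add]; congr 1; ring
  rw [h3]
  field_simp

lemma star (a : ℤ) (m j : ℕ) :
    qint qq (j + m + 1) * qbinom qq (a + 1) (m + 1)
      = qq ^ ((m:ℤ) + 1) * qint qq j * qbinom qq a (m + 1)
        + qint qq (a + j + 1) * qbinom qq a m := by
  have h1 : qint qq ((j:ℤ) + m + 1) = qint qq ((m:ℤ)+1) + qq ^ ((m:ℤ)+1) * qint qq j := by
    rw [← qint_add]; congr 1; ring
  have h2 : qint qq (a + (j:ℤ) + 1) = qint qq (a+1) + qq ^ (a+1) * qint qq j := by
    rw [← qint_add]; congr 1; ring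
  have h3 := qbinom_pascal a m
  have h4 := qbinom_absorb a m
  have h5 : qq ^ ((m:ℤ)+1) * qq ^ (a - m) = qq ^ (a+1) := by
    rw [← qzpow_add]; congr 1; ring
  rw [h1, h2, h3]
  linear_combination h4 + qint qq j * qbinom qq a m * h5 - qint qq ((m:ℤ)+1) * h3

/-- The coefficient family. -/
def cf (i d j : ℕ) : K :=
  if j ≤ d then
    (-1) ^ (d - j) * qq ^ (-(d * (d - i) : ℤ) + ((d - j).choose 2 : ℤ)) *
      qbinom qq ((d : ℤ) - i) (d - j)
  else 0

lemma choose2_succ (m : ℕ) : (m + 1).choose 2 = m.choose 2 + m := by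
  rw [Nat.choose_succ_succ]
  simp [Nat.choose_one_right]
  omega

lemma key (i d j : ℕ) (hid : i ≤ d) (hj : j ≤ d + 1) :
    cf i (d+1) j * qint qq ((d:ℤ) + 1)
      = cf i d (j-1) * qq ^ ((i:ℤ) - d - j) * qint qq (j:ℤ)
        + cf i d j * qint qq ((i:ℤ) - d - j - 1) := by
  by_cases hjd : j ≤ d
  · obtain ⟨a, ha⟩ : ∃ a, d = i + a := ⟨d - i, by omega⟩
    obtain ⟨m, hm⟩ : ∃ m, d = j + m := ⟨d - j, by omega⟩
    have hdza : (d:ℤ) = i + a := by omega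
    have hdzm : (d:ℤ) = j + m := by omega
    rcases Nat.eq_zero_or_pos j with hj0 | hjpos
    · subst hj0
      have hstar : qint qq ((m:ℤ) + 1) * qbinom qq ((a:ℤ) + 1) (m + 1)
          = qint qq ((a:ℤ) + 1) * qbinom qq (a:ℤ) m := by
        have h := star (a:ℤ) m 0
        simpa [qint_zero] using h
      simp only [Nat.cast_zero, qint_zero, mul_zero, zero_add, sub_zero]
      simp only [cf, if_pos (show 0 ≤ d + 1 by omega), if_pos (show (0:ℕ) ≤ d by omega)]
      rw [show d + 1 - 0 = m + 1 by omega, show d - 0 = m by omega,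
          show ((d+1:ℕ):ℤ) - (i:ℤ) = (a:ℤ) + 1 by push_cast; omega,
          show ((d:ℕ):ℤ) - (i:ℤ) = (a:ℤ) by push_cast; omega,
          show (i:ℤ) - (d:ℤ) - 1 = -((a:ℤ) + 1) by omega,
          qint_neg,
          show ((d:ℤ) + 1) = ((m:ℤ)) + 1 by omega]
      have hw2 : qq ^ (-((d:ℤ) * (a:ℤ)) + ((m.choose 2 : ℕ) : ℤ)) * qq ^ (-((a:ℤ) + 1))
          = qq ^ (-(((d+1:ℕ):ℤ) * ((a:ℤ)+1)) + (((m+1).choose 2 : ℕ) : ℤ)) := by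
        rw [← qzpow_add]
        congr 1
        rw [choose2_succ]
        push_cast
        linear_combination hdzm
      linear_combination
        ((-1:K)^(m+1) * qq ^ (-(((d+1:ℕ):ℤ) * ((a:ℤ)+1)) + (((m+1).choose 2 : ℕ) : ℤ))) * hstar
        - ((-1:K)^(m+1) * qint qq ((a:ℤ) + 1) * qbinom qq (a:ℤ) m) * hw2
    · have hstar := star (a:ℤ) m j
      simp only [cf, if_pos (show j ≤ d + 1 by omega), if_pos (show j - 1 ≤ d by omega),
        if_pos hjd]
      rw [show d + 1 - j = m + 1 by omega,
          show d - (j-1) = m + 1 by omega,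
          show d - j = m by omega,
          show ((d+1:ℕ):ℤ) - (i:ℤ) = (a:ℤ) + 1 by push_cast; omega,
          show ((d:ℕ):ℤ) - (i:ℤ) = (a:ℤ) by push_cast; omega,
          show (i:ℤ) - (d:ℤ) - (j:ℤ) - 1 = -((a:ℤ) + (j:ℤ) + 1) by omega,
          qint_neg,
          show ((d:ℤ) + 1) = ((j:ℤ)) + (m:ℤ) + 1 by omega]
      have hw1 : qq ^ (-((d:ℤ) * (a:ℤ)) + (((m+1).choose 2 : ℕ) : ℤ)) * qq ^ ((i:ℤ) - (d:ℤ) - (j:ℤ))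
          = qq ^ (-(((d+1:ℕ):ℤ) * ((a:ℤ)+1)) + (((m+1).choose 2 : ℕ) : ℤ)) * qq ^ ((m:ℤ) + 1) := by
        rw [← qzpow_add, ← qzpow_add]
        congr 1
        push_cast
        linear_combination hdzm - hdza
      have hw2 : qq ^ (-((d:ℤ) * (a:ℤ)) + ((m.choose 2 : ℕ) : ℤ)) * qq ^ (-((a:ℤ) + (j:ℤ) + 1))
          = qq ^ (-(((d+1:ℕ):ℤ) * ((a:ℤ)+1)) + (((m+1).choose 2 : ℕ) : ℤ)) := by
        rw [← qzpow_add]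
        congr 1
        rw [choose2_succ]
        push_cast
        linear_combination hdzm
      linear_combination
        ((-1:K)^(m+1) * qq ^ (-(((d+1:ℕ):ℤ) * ((a:ℤ)+1)) + (((m+1).choose 2 : ℕ) : ℤ))) * hstar
        - ((-1:K)^(m+1) * qint qq (j:ℤ) * qbinom qq (a:ℤ) (m+1)) * hw1
        - ((-1:K)^(m+1) * qint qq ((a:ℤ) + (j:ℤ) + 1) * qbinom qq (a:ℤ) m) * hw2
  · have hjd1 : j = d + 1 := by omega
    subst hjd1
    have h0 : cf i d (d+1) = 0 := by simp [cf]
    rw [h0, zero_mul, add_zero, show d + 1 - 1 = d by omega]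
    simp only [cf, if_pos (le_refl (d+1)), if_pos (le_refl d), Nat.sub_self]
    rw [show Nat.choose 0 2 = 0 from rfl, qbinom_zero, qbinom_zero,
        show ((d+1:ℕ):ℤ) = (d:ℤ) + 1 by push_cast; ring]
    have hw : qq ^ (-((d:ℤ) * ((d:ℤ) - (i:ℤ))) + ((0:ℕ) : ℤ)) * qq ^ ((i:ℤ) - (d:ℤ) - ((d:ℤ)+1))
        = qq ^ (-(((d:ℤ)+1) * (((d:ℤ)+1) - (i:ℤ))) + ((0:ℕ) : ℤ)) := by
      rw [← qzpow_add]
      congr 1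
      push_cast
      ring
    linear_combination -qint qq ((d:ℤ)+1) * hw

lemma qbase_succ (m : ℤ) (n : ℕ) :
    qbase qq m (n + 1) = qbase qq m n * qb qq (m - n) * C (qint qq ((n:ℤ) + 1))⁻¹ := by
  unfold qbase
  rw [qfact_succ]
  have h1 : (∏ i ∈ range (n+1), qb qq (m - ↑(n+1) + 1 + i))
      = (∏ i ∈ range n, qb qq (m - n + 1 + i)) * qb qq (m - n) := by
    rw [Finset.prod_range_succ']
    congr 1
    · apply Finset.prod_congr rfl
      intro i _
      congr 1
      push_cast
      ring
    · congr 1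
      push_cast
      ring
  rw [h1, mul_inv, map_mul]
  ring

lemma qbase_diag_succ (j : ℕ) :
    qbase qq (↑(j+1)) (j+1) = qbase qq j j * qb qq ((j:ℤ) + 1) * C (qint qq ((j:ℤ) + 1))⁻¹ := by
  unfold qbase
  rw [qfact_succ]
  have h1 : (∏ i ∈ range (j+1), qb qq (↑(j+1) - ↑(j+1) + 1 + i))
      = (∏ i ∈ range j, qb qq ((j:ℤ) - j + 1 + i)) * qb qq ((j:ℤ) + 1) := by
    rw [Finset.prod_range_succ]
    congr 1
    · apply Finset.prod_congr rfl
      intro i _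
      congr 1
      push_cast
      ring
    · congr 1
      push_cast
      ring
  rw [h1, mul_inv, map_mul]
  ring

lemma qb_split (z w : ℤ) : qb qq z = C (qq ^ (z - w)) * qb qq w + C (qint qq (z - w)) := by
  unfold qb
  have h1 : qint qq z = qint qq (z - w) + qq ^ (z - w) * qint qq w := by
    rw [← qint_add]; congr 1; ring
  have h2 : qq ^ z = qq ^ (z - w) * qq ^ w := by
    rw [← qzpow_add]; congr 1; ring
  rw [h1, h2]
  simp only [map_add, map_mul]
  ring

lemma qb_mul_diag (z : ℤ) (j : ℕ) :
    qb qq z * qbase qq j j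
      = C (qq ^ (z - (↑j + 1)) * qint qq ((j:ℤ) + 1)) * qbase qq (↑(j+1)) (j+1)
        + C (qint qq (z - (↑j + 1))) * qbase qq j j := by
  rw [qb_split z ((j:ℤ) + 1), qbase_diag_succ, map_mul]
  have hne : qint qq ((j:ℤ) + 1) ≠ 0 := qint_ne_zero _ (by omega)
  have hcc : C (qint qq ((j:ℤ) + 1)) * C (qint qq ((j:ℤ) + 1))⁻¹ = 1 := by
    rw [← map_mul, mul_inv_cancel₀ hne, map_one]
  linear_combination (- C (qq ^ (z - ((j:ℤ) + 1))) * qb qq ((j:ℤ) + 1) * qbase qq (j:ℤ) j) * hcc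

lemma cf_oob (i d j : ℕ) (h : d < j) : cf i d j = 0 := by simp [cf]; omega

lemma aux_diag (d : ℕ) :
    qbase qq d d = ∑ j ∈ range (d + 1), C (cf d d j) * qbase qq j j := by
  rw [Finset.sum_eq_single d]
  · have h1 : cf d d d = 1 := by
      simp [cf, qbinom_zero, Nat.sub_self]
    rw [h1, map_one, one_mul]
  · intro j hj hne
    have h1 : cf d d j = 0 := by
      simp only [cf, if_pos (show j ≤ d by rw [mem_range] at hj; omega)]
      rw [sub_self, qbinom_top_zero (d - j) (by rw [mem_range] at hj; omega)]
      ring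
    rw [h1, map_zero, zero_mul]
  · intro h
    exact absurd (self_mem_range_succ d) h

theorem aux (i d : ℕ) (hid : i ≤ d) :
    qbase qq i d = ∑ j ∈ range (d + 1), C (cf i d j) * qbase qq j j := by
  induction d generalizing i with
  | zero =>
    have : i = 0 := by omega
    subst this
    exact aux_diag 0
  | succ d IH =>
    by_cases hi : i ≤ d
    · have hne : qint qq ((d:ℤ) + 1) ≠ 0 := qint_ne_zero _ (by omega)
      rw [qbase_succ, IH i hi, Finset.sum_mul, Finset.sum_mul]
      have hterm : ∀ j : ℕ,
          C (cf i d j) * qbase qq (j:ℤ) j * qb qq ((i:ℤ) - ↑d) * C (qint qq ((d:ℤ)+1))⁻¹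
          = C (cf i d j * (qq ^ ((i:ℤ) - ↑d - ((j:ℤ) + 1)) * qint qq ((j:ℤ) + 1))
                * (qint qq ((d:ℤ)+1))⁻¹) * qbase qq (↑(j+1)) (j+1)
            + C (cf i d j * qint qq ((i:ℤ) - ↑d - ((j:ℤ) + 1)) * (qint qq ((d:ℤ)+1))⁻¹)
                * qbase qq (j:ℤ) j := by
        intro j
        have h := qb_mul_diag ((i:ℤ) - ↑d) j
        calc C (cf i d j) * qbase qq (j:ℤ) j * qb qq ((i:ℤ) - ↑d) * C (qint qq ((d:ℤ)+1))⁻¹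
            = C (cf i d j) * (qb qq ((i:ℤ) - ↑d) * qbase qq (j:ℤ) j)
                * C (qint qq ((d:ℤ)+1))⁻¹ := by ring
          _ = _ := by rw [h]; simp only [map_mul]; ring
      rw [Finset.sum_congr rfl (fun j _ => hterm j), Finset.sum_add_distrib]
      rw [Finset.sum_range_succ' (fun j => C (cf i (d+1) j) * qbase qq (j:ℤ) j) (d+1)]
      rw [Finset.sum_range_succ'
        (fun j => C (cf i d j * qint qq ((i:ℤ) - ↑d - ((j:ℤ) + 1)) * (qint qq ((d:ℤ)+1))⁻¹)
          * qbase qq (j:ℤ) j) d]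
      have hpad : ∑ j ∈ range (d+1),
          C (cf i d (j+1) * qint qq ((i:ℤ) - ↑d - ((((j+1):ℕ):ℤ) + 1)) * (qint qq ((d:ℤ)+1))⁻¹)
            * qbase qq (((j+1):ℕ):ℤ) (j+1)
          = ∑ j ∈ range d,
          C (cf i d (j+1) * qint qq ((i:ℤ) - ↑d - ((((j+1):ℕ):ℤ) + 1)) * (qint qq ((d:ℤ)+1))⁻¹)
            * qbase qq (((j+1):ℕ):ℤ) (j+1) := by
        rw [Finset.sum_range_succ, cf_oob i d (d+1) (by omega)]
        simp
      rw [← hpad, ← add_assoc, ← Finset.sum_add_distrib]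
      congr 1
      · apply Finset.sum_congr rfl
        intro j hjr
        rw [mem_range] at hjr
        have hk := key i d (j+1) hi (by omega)
        simp only [Nat.add_sub_cancel] at hk
        push_cast at hk ⊢
        rw [← add_mul, ← map_add]
        congr 1
        rw [show ((i:ℤ) - ↑d - (↑j + 1 + 1) : ℤ) = ↑i - ↑d - (↑j + 1) - 1 by ring]
        rw [C_inj]
        field_simp
        linear_combination -hk
      · have hk := key i d 0 hi (by omega)
        simp only [Nat.zero_sub, Nat.cast_zero, qint_zero, mul_zero, zero_add, sub_zero] at hk
        push_cast
        congr 1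
        rw [C_inj]
        field_simp
        linear_combination -hk
    · have : i = d + 1 := by omega
      subst this
      exact aux_diag (d+1)

theorem qbase_in_B_basis (i d : ℕ) (hid : i ≤ d) :
    qbase qq i d = ∑ j ∈ range (d + 1),
      C ((-1) ^ (d - j) * qq ^ (-(d * (d - i) : ℤ) + ((d - j).choose 2 : ℤ)) *
        qbinom qq ((d : ℤ) - i) (d - j)) * qbase qq j j := by
  rw [aux i d hid]
  apply Finset.sum_congr rfl
  intro j hj
  rw [mem_range] at hj
  congr 1
  simp only [cf, if_pos (show j ≤ d by omega)]

end
end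

section
/- For every polynomial E ∈ ℚ(q)[x], the linear form Ψ satisfies the shift identity q·Ψ(E(1+qx)) − Ψ(E) = (q−1)·E(0) + E'(0), where E' is the derivative of E. -/
open Polynomial Finset

noncomputable section

/-- The linear form V: essentially (1/q) times the derivative at x = [-1]_q = -1/q. -/
def qV (E : Polynomial K) : K := (Polynomial.derivative E).eval (-qq⁻¹) / qq

/-- The defining property of the q-summation operator Σ:
(ΣE)([n]_q) = Σ_{j=0}^n q^j E([j]_q) for all n ≥ 0. -/
def IsQSigma (S : Polynomial K →ₗ[K] Polynomial K) : Prop :=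
  ∀ E : Polynomial K, ∀ n : ℕ,
    (S E).eval (qint qq n) = ∑ j ∈ range (n + 1), qq ^ j * E.eval (qint qq j)

lemma qint_nat (n : ℕ) : qint qq n = (qq ^ n - 1) / (qq - 1) := by
  rw [qint, zpow_natCast]

lemma qint_succ (n : ℕ) : qint qq (n + 1 : ℕ) = 1 + qq * qint qq n := by
  rw [qint_nat, qint_nat]
  field_simp [qq_sub_one_ne_zero]
  ring

lemma qq_pow_inj : Function.Injective (fun n : ℕ => qq ^ n) := by
  intro m n h
  simp only [qq, ← RatFunc.algebraMap_X, ← map_pow] at h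
  have := RatFunc.algebraMap_injective ℚ h
  have := congrArg Polynomial.natDegree this
  simpa using this

lemma qint_inj : Function.Injective (fun n : ℕ => qint qq n) := by
  intro m n h
  simp only [qint_nat] at h
  have h2 : qq ^ m - 1 = qq ^ n - 1 := by
    have := congrArg (fun z => z * (qq - 1)) h
    simpa [div_mul_cancel₀ _ qq_sub_one_ne_zero] using this
  exact qq_pow_inj (by simpa [sub_left_inj] using h2)

lemma poly_eq (P Q : Polynomial K)
    (h : ∀ n : ℕ, P.eval (qint qq n) = Q.eval (qint qq n)) : P = Q := by
  have h0 : {x | (P - Q).IsRoot x}.Infinite :=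
    Set.infinite_of_injective_forall_mem qint_inj
      (fun n => by simp [Polynomial.IsRoot, sub_eq_zero, h n])
  have := Polynomial.eq_zero_of_infinite_isRoot _ h0
  exact sub_eq_zero.mp this

lemma qint_mul (n : ℕ) : qint qq n * (qq - 1) = qq ^ n - 1 := by
  rw [qint_nat, div_mul_cancel₀ _ qq_sub_one_ne_zero]

lemma qint_pow (n : ℕ) : 1 + (qq - 1) * qint qq n = qq ^ n := by
  rw [mul_comm, qint_mul]; ring

lemma key_s12 (P : Polynomial K) (n : ℕ) :
    (P.comp (1 + C qq * X)).eval (qint qq n) = P.eval (qint qq (n + 1 : ℕ)) := by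
  rw [eval_comp, qint_succ]; simp


theorem psi_shift (S : Polynomial K →ₗ[K] Polynomial K) (hS : IsQSigma S) (E : Polynomial K) :
    qq * qV (S (E.comp (1 + C qq * X))) - qV (S E) =
      (qq - 1) * E.eval 0 + (Polynomial.derivative E).eval 0 := by
  have id1 : C qq * S (E.comp (1 + C qq * X)) =
      (S E).comp (1 + C qq * X) - C (E.eval 0) := by
    apply poly_eq; intro n
    rw [eval_mul, eval_C, hS, eval_sub, eval_C, key_s12, hS,
      Finset.sum_range_succ' (fun j => qq ^ j * E.eval (qint qq j)) (n + 1),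
      Finset.mul_sum]
    simp only [Nat.cast_zero, qint_zero, pow_zero, one_mul, add_sub_cancel_right]
    refine Finset.sum_congr rfl fun j _ => ?_
    rw [key_s12]
    push_cast
    ring
  have id2 : C qq * (1 + (C qq - 1) * X) * (E.comp (1 + C qq * X)) =
      (S E).comp (1 + C qq * X) - S E := by
    apply poly_eq; intro n
    rw [eval_sub, key_s12, hS, hS, Finset.sum_range_succ]
    simp only [eval_mul, eval_add, eval_one, eval_sub, eval_C, eval_X, key_s12,
      add_sub_cancel_left]
    rw [qint_pow]
    push_cast
    ring
  have ha : (1 + C qq * X).eval (-qq⁻¹) = 0 := by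
    simp [mul_inv_cancel₀ qq_ne_zero]
  have eq1 := congrArg (fun p => (Polynomial.derivative p).eval (-qq⁻¹)) id1
  have eq2 := congrArg (fun p => (Polynomial.derivative p).eval (-qq⁻¹)) id2
  simp only [derivative_mul, derivative_comp, derivative_C, derivative_one, derivative_add,
    derivative_sub, derivative_X, eval_add, eval_mul, eval_sub, eval_C, eval_one, eval_X,
    eval_comp, ha, zero_mul, mul_zero, zero_add, add_zero, mul_one, sub_zero, zero_sub] at eq1 eq2
  have hq := qq_ne_zero
  have h3 : 1 + (qq - 1) * -qq⁻¹ = qq⁻¹ := by field_simp; ring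
  rw [h3, mul_inv_cancel₀ hq] at eq2
  have e1' := mul_left_cancel₀ hq eq1
  rw [qV, qV, e1']
  field_simp at eq2 ⊢
  linear_combination -eq2


end
end

section
/- Let d ≥ 1, a = (a_1,…,a_d) ∈ ℝ^d nonzero, δ = (2 max_j |a_j|)^{-1}, and N ∈ ℕ. Then for all s = (s_1,…,s_d) ∈ ℂ^d and x ∈ [−δ, δ], Π_{j=1}^d (1 − x a_j)^{−s_j} = Σ_{ℓ=0}^N c_ℓ(s) x^ℓ + x^{N+1} ρ_N(x; s), where c_ℓ(s) = (−1)^ℓ Σ_{|α|=ℓ} a^α Π_j binom(−s_j, α_j) and ρ_N(x; s) = (−1)^{N+1}(N+1) Σ_{|α|=N+1} a^α Π_j binom(−s_j, α_j) ∫_0^1 (1−t)^N Π_j (1 − t x a_j)^{−s_j−α_j} dt; moreover for every compact K ⊂ ℂ^d there is C > 0 with |ρ_N(x; s)| ≤ C for all (s,x) ∈ K × [−δ,δ]. -/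
open Finset

/-- The generalized binomial coefficient binom(s, k) = s(s-1)⋯(s-k+1)/k!. -/
noncomputable def cbinom (s : ℂ) (k : ℕ) : ℂ := (∏ i ∈ range k, (s - i)) / (k.factorial : ℂ)



lemma cbinom_zero (s : ℂ) : cbinom s 0 = 1 := by simp [cbinom]

lemma cbinom_rec (s : ℂ) (k : ℕ) :
    (s + k) * cbinom (-s) k = -((k + 1 : ℕ) : ℂ) * cbinom (-s) (k + 1) := by
  have h1 : cbinom (-s) (k+1) * ((k+1 : ℕ) : ℂ) = cbinom (-s) k * (-s - k) := by
    rw [cbinom, cbinom, prod_range_succ, Nat.factorial_succ]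
    have hk : ((k+1 : ℕ) : ℂ) ≠ 0 := Nat.cast_ne_zero.2 (Nat.succ_ne_zero k)
    have hf : ((k.factorial : ℕ) : ℂ) ≠ 0 := Nat.cast_ne_zero.2 k.factorial_ne_zero
    field_simp
    push_cast
    ring
  have : -((k + 1 : ℕ) : ℂ) * cbinom (-s) (k + 1) = -(cbinom (-s) k * (-s - k)) := by
    rw [← h1]; ring
  rw [this]; ring

lemma cbinom_norm_le (z : ℂ) (k : ℕ) : ‖cbinom z k‖ ≤ (‖z‖ + k) ^ k := by
  rw [cbinom, norm_div]
  have h1 : (1:ℝ) ≤ ‖((k.factorial : ℕ) : ℂ)‖ := by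
    rw [Complex.norm_natCast]
    exact_mod_cast Nat.one_le_iff_ne_zero.2 k.factorial_ne_zero
  calc ‖∏ i ∈ range k, (z - i)‖ / ‖((k.factorial : ℕ) : ℂ)‖
      ≤ ‖∏ i ∈ range k, (z - i)‖ := by
        apply div_le_self (norm_nonneg _) h1
    _ ≤ (‖z‖ + k) ^ k := by
        rw [norm_prod]
        have : ∀ i ∈ range k, ‖z - (i:ℂ)‖ ≤ ‖z‖ + k := by
          intro i hi
          calc ‖z - (i:ℂ)‖ ≤ ‖z‖ + ‖(i:ℂ)‖ := norm_sub_le _ _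
            _ ≤ ‖z‖ + k := by
                rw [Complex.norm_natCast]
                have := (mem_range.1 hi).le
                have : (i:ℝ) ≤ k := by exact_mod_cast this
                linarith
        calc ∏ i ∈ range k, ‖z - (i:ℂ)‖ ≤ ∏ _i ∈ range k, (‖z‖ + k) := by
              apply Finset.prod_le_prod (fun i _ => norm_nonneg _) this
          _ = (‖z‖ + k) ^ k := by rw [prod_const, card_range]



lemma sumkey_point {d : ℕ} (a : Fin d → ℝ) (s : Fin d → ℂ) (J : (Fin d → ℕ) → ℂ)
    (α : Fin d → ℕ) (k : Fin d) :
    ((∏ j, ((a j : ℂ)) ^ α j) * ∏ j, cbinom (-s j) (α j)) *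
        ((a k : ℂ) * (s k + α k) * J (Function.update α k (α k + 1)))
    = -(((Function.update α k (α k + 1)) k : ℕ) : ℂ) *
        (((∏ j, ((a j : ℂ)) ^ (Function.update α k (α k + 1)) j) *
          ∏ j, cbinom (-s j) ((Function.update α k (α k + 1)) j)) *
            J (Function.update α k (α k + 1))) := by
  set β := Function.update α k (α k + 1) with hβ
  have hβk : β k = α k + 1 := Function.update_self _ _ _
  have hne : ∀ j ∈ univ.erase k, β j = α j := fun j hj =>
    Function.update_of_ne (Finset.ne_of_mem_erase hj) _ _
  have hpa : (∏ j, ((a j : ℂ)) ^ β j) = (a k : ℂ) * ∏ j, ((a j : ℂ)) ^ α j := by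
    rw [← Finset.mul_prod_erase univ (fun j => ((a j:ℂ))^ β j) (mem_univ k),
        ← Finset.mul_prod_erase univ (fun j => ((a j:ℂ))^ α j) (mem_univ k),
        Finset.prod_congr rfl (fun j hj => by rw [hne j hj]), hβk, pow_succ]
    ring
  have hpc : (∏ j, cbinom (-s j) (β j))
      = cbinom (-s k) (α k + 1) * ∏ j ∈ univ.erase k, cbinom (-s j) (α j) := by
    rw [← Finset.mul_prod_erase univ (fun j => cbinom (-s j) (β j)) (mem_univ k),
        Finset.prod_congr rfl (fun j hj => by rw [hne j hj]), hβk]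
  have hpc0 : (∏ j, cbinom (-s j) (α j))
      = cbinom (-s k) (α k) * ∏ j ∈ univ.erase k, cbinom (-s j) (α j) :=
    (Finset.mul_prod_erase univ (fun j => cbinom (-s j) (α j)) (mem_univ k)).symm
  rw [hpa, hpc, hpc0, hβk]
  have h := cbinom_rec (s k) (α k)
  push_cast at h ⊢
  linear_combination ((∏ j, ((a j : ℂ)) ^ α j) * (∏ j ∈ univ.erase k, cbinom (-s j) (α j))
    * (a k : ℂ) * J β) * h

lemma sumkey {d : ℕ} (a : Fin d → ℝ) (s : Fin d → ℂ) (n : ℕ) (J : (Fin d → ℕ) → ℂ) :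
    (∑ α ∈ Finset.Nat.antidiagonalTuple d n, ∑ k,
      ((∏ j, ((a j : ℂ)) ^ α j) * ∏ j, cbinom (-s j) (α j)) *
        ((a k : ℂ) * (s k + α k) * J (Function.update α k (α k + 1))))
      = -((n + 1 : ℕ) : ℂ) * ∑ β ∈ Finset.Nat.antidiagonalTuple d (n + 1),
          ((∏ j, ((a j : ℂ)) ^ β j) * ∏ j, cbinom (-s j) (β j)) * J β := by
  classical
  set G : (Fin d → ℕ) → Fin d → ℂ := fun β k =>
    -((β k : ℕ) : ℂ) * (((∏ j, ((a j : ℂ)) ^ β j) * ∏ j, cbinom (-s j) (β j)) * J β) with hG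
  have step1 : (∑ α ∈ Finset.Nat.antidiagonalTuple d n, ∑ k,
      ((∏ j, ((a j : ℂ)) ^ α j) * ∏ j, cbinom (-s j) (α j)) *
        ((a k : ℂ) * (s k + α k) * J (Function.update α k (α k + 1))))
      = ∑ p ∈ Finset.Nat.antidiagonalTuple d n ×ˢ (univ : Finset (Fin d)),
          G (Function.update p.1 p.2 (p.1 p.2 + 1)) p.2 := by
    rw [Finset.sum_product]
    exact sum_congr rfl fun α _ => sum_congr rfl fun k _ => sumkey_point a s J α k
  rw [step1]
  have step2 : (∑ p ∈ Finset.Nat.antidiagonalTuple d n ×ˢ (univ : Finset (Fin d)),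
      G (Function.update p.1 p.2 (p.1 p.2 + 1)) p.2)
      = ∑ p ∈ (Finset.Nat.antidiagonalTuple d (n+1) ×ˢ (univ : Finset (Fin d))).filter
          (fun p => p.1 p.2 ≠ 0), G p.1 p.2 := by
    apply Finset.sum_nbij' (fun p => (Function.update p.1 p.2 (p.1 p.2 + 1), p.2))
      (fun p => (Function.update p.1 p.2 (p.1 p.2 - 1), p.2))
    · rintro ⟨α, k⟩ hp
      simp only [Finset.mem_product, Finset.Nat.mem_antidiagonalTuple, mem_univ, and_true] at hp
      simp only [Finset.mem_filter, Finset.mem_product, Finset.Nat.mem_antidiagonalTuple,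
        mem_univ, and_true, Function.update_self]
      have hsplit : ∑ j, α j = α k + ∑ x ∈ univ \ {k}, α x := by
        conv_lhs => rw [← Function.update_eq_self k α]
        rw [Finset.sum_update_of_mem (mem_univ k)]
      constructor
      · rw [Finset.sum_update_of_mem (mem_univ k)]
        omega
      · omega
    · rintro ⟨β, k⟩ hp
      simp only [Finset.mem_filter, Finset.mem_product, Finset.Nat.mem_antidiagonalTuple,
        mem_univ, and_true] at hp
      simp only [Finset.mem_product, Finset.Nat.mem_antidiagonalTuple, mem_univ, and_true]
      have hsplit : ∑ j, β j = β k + ∑ x ∈ univ \ {k}, β x := by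
        conv_lhs => rw [← Function.update_eq_self k β]
        rw [Finset.sum_update_of_mem (mem_univ k)]
      rw [Finset.sum_update_of_mem (mem_univ k)]
      omega
    · rintro ⟨α, k⟩ _
      simp only [Function.update_self, Function.update_idem, Nat.add_sub_cancel,
        Function.update_eq_self, Prod.mk.injEq, and_true]
    · rintro ⟨β, k⟩ hp
      simp only [Finset.mem_filter, Finset.mem_product, Finset.Nat.mem_antidiagonalTuple,
        mem_univ, and_true] at hp
      simp only [Function.update_self, Function.update_idem, Prod.mk.injEq, and_true]
      rw [Nat.sub_add_cancel (Nat.one_le_iff_ne_zero.2 hp.2)]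
      exact Function.update_eq_self _ _
    · rintro ⟨α, k⟩ _
      rfl
  rw [step2]
  have step3 : (∑ p ∈ (Finset.Nat.antidiagonalTuple d (n+1) ×ˢ (univ : Finset (Fin d))).filter
      (fun p => p.1 p.2 ≠ 0), G p.1 p.2)
      = ∑ p ∈ Finset.Nat.antidiagonalTuple d (n+1) ×ˢ (univ : Finset (Fin d)), G p.1 p.2 := by
    apply Finset.sum_filter_of_ne
    rintro ⟨β, k⟩ _ hne
    intro h0
    apply hne
    show -((β k : ℕ) : ℂ) * _ = 0
    rw [show β k = 0 from h0]
    simp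
  rw [step3, Finset.sum_product]
  rw [Finset.mul_sum]
  apply sum_congr rfl
  intro β hβ
  rw [Finset.Nat.mem_antidiagonalTuple] at hβ
  have hs : (∑ k, ((β k : ℕ) : ℂ)) = ((n + 1 : ℕ) : ℂ) := by
    rw [← Nat.cast_sum, hβ]
  have : ∑ k, G β k = (∑ k, ((β k : ℕ) : ℂ)) *
      (-(((∏ j, ((a j : ℂ)) ^ β j) * ∏ j, cbinom (-s j) (β j)) * J β)) := by
    rw [Finset.sum_mul]
    exact sum_congr rfl fun k _ => by simp only [hG]; ring
  rw [this, hs]; ring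


section analytic
variable {d : ℕ} (a : Fin d → ℝ) (x : ℝ)

lemma base_hasDerivAt (k : Fin d) (t : ℝ) :
    HasDerivAt (fun u : ℝ => ((1 - u * x * a k : ℝ) : ℂ)) (-(x * a k) : ℂ) t := by
  have h1 : HasDerivAt (fun u : ℝ => 1 - u * x * a k) (-(x * a k)) t := by
    simpa using (((hasDerivAt_id t).mul_const x).mul_const (a k)).const_sub 1
  exact_mod_cast h1.ofReal_comp

lemma factor_hasDerivAt (k : Fin d) (w : ℂ) (t : ℝ) (hb : 0 < 1 - t * x * a k) :
    HasDerivAt (fun u : ℝ => (((1 - u * x * a k : ℝ) : ℂ)) ^ w)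
      (w * (((1 - t * x * a k : ℝ) : ℂ)) ^ (w - 1) * (-(x * a k) : ℂ)) t := by
  have hs : ((1 - t * x * a k : ℝ) : ℂ) ∈ Complex.slitPlane :=
    Complex.ofReal_mem_slitPlane.2 hb
  have h2 := (Complex.hasStrictDerivAt_cpow_const (c := w) hs).hasDerivAt
  have := h2.comp t (base_hasDerivAt a x k t)
  simpa [Function.comp_def, mul_comm, mul_assoc, mul_left_comm] using this

lemma prod_hasDerivAt (w : Fin d → ℂ) (t : ℝ) (hb : ∀ j, 0 < 1 - t * x * a j) :
    HasDerivAt (fun u : ℝ => ∏ j, (((1 - u * x * a j : ℝ) : ℂ)) ^ w j)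
      (∑ k, (-(x * a k) : ℂ) * w k *
        ∏ j, (((1 - t * x * a j : ℝ) : ℂ)) ^ (Function.update w k (w k - 1) j)) t := by
  classical
  have h := HasDerivAt.finset_prod (u := univ)
    (f := fun k (u : ℝ) => (((1 - u * x * a k : ℝ) : ℂ)) ^ w k)
    (f' := fun k => w k * (((1 - t * x * a k : ℝ) : ℂ)) ^ (w k - 1) * (-(x * a k) : ℂ))
    (fun k _ => factor_hasDerivAt a x k (w k) t (hb k))
  convert h using 1
  · rfl
  · ext u; rw [Finset.prod_apply]
  apply sum_congr rfl
  intro k _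
  have : (∏ j, (((1 - t * x * a j : ℝ) : ℂ)) ^ (Function.update w k (w k - 1) j))
      = (((1 - t * x * a k : ℝ) : ℂ)) ^ (w k - 1) *
        ∏ j ∈ univ.erase k, (((1 - t * x * a j : ℝ) : ℂ)) ^ w j := by
    rw [← Finset.mul_prod_erase univ _ (mem_univ k), Function.update_self]
    congr 1
    exact Finset.prod_congr rfl fun j hj => by
      rw [Function.update_of_ne (Finset.ne_of_mem_erase hj)]
  rw [this, smul_eq_mul]
  ring

lemma prod_continuousOn (w : Fin d → ℂ) (hb : ∀ j, ∀ t ∈ Set.Icc (0:ℝ) 1, 0 < 1 - t * x * a j) :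
    ContinuousOn (fun t : ℝ => ∏ j, (((1 - t * x * a j : ℝ) : ℂ)) ^ w j) (Set.Icc 0 1) := by
  apply continuousOn_finset_prod
  intro j _
  intro t ht
  apply ContinuousAt.continuousWithinAt
  have hbase : ContinuousAt (fun t : ℝ => ((1 - t * x * a j : ℝ) : ℂ)) t := by
    apply Continuous.continuousAt; continuity
  exact hbase.cpow continuousAt_const (Complex.ofReal_mem_slitPlane.2 (hb j t ht))

end analytic


noncomputable section defs
variable {d : ℕ} (a : Fin d → ℝ) (x : ℝ) (s : Fin d → ℂ)

def gfun (α : Fin d → ℕ) (t : ℝ) : ℂ :=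
  ∏ j, (((1 - t * x * a j : ℝ) : ℂ)) ^ (-s j - (α j : ℕ))

def Dfun (α : Fin d → ℕ) (t : ℝ) : ℂ :=
  ∑ k, (x : ℂ) * ((a k : ℂ) * (s k + (α k : ℕ))) * gfun a x s (Function.update α k (α k + 1)) t

def Ifun (n : ℕ) (α : Fin d → ℕ) : ℂ :=
  ∫ t in (0:ℝ)..1, ((1 - t : ℝ) : ℂ) ^ n * gfun a x s α t

lemma g_cont (hb : ∀ j, ∀ t ∈ Set.Icc (0:ℝ) 1, 0 < 1 - t * x * a j) (α : Fin d → ℕ) : ContinuousOn (gfun a x s α) (Set.Icc 0 1) :=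
  prod_continuousOn a x _ hb

lemma g_zero (α : Fin d → ℕ) : gfun a x s α 0 = 1 := by
  simp [gfun]

lemma D_cont (hb : ∀ j, ∀ t ∈ Set.Icc (0:ℝ) 1, 0 < 1 - t * x * a j) (α : Fin d → ℕ)  : ContinuousOn (Dfun a x s α) (Set.Icc 0 1) :=
  continuousOn_finset_sum _ fun k _ => continuousOn_const.mul (g_cont a x s hb _)

lemma pw_cont (m : ℕ) : Continuous (fun t : ℝ => ((1 - t : ℝ) : ℂ) ^ m) := by
  apply Continuous.pow
  exact Complex.continuous_ofReal.comp (continuous_const.sub continuous_id)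

lemma gI_intable (hb : ∀ j, ∀ t ∈ Set.Icc (0:ℝ) 1, 0 < 1 - t * x * a j) (m : ℕ) (α : Fin d → ℕ) :
    IntervalIntegrable (fun t => ((1 - t : ℝ) : ℂ) ^ m * gfun a x s α t) MeasureTheory.volume 0 1 := by
  apply ContinuousOn.intervalIntegrable
  rw [Set.uIcc_of_le (zero_le_one)]
  exact ((pw_cont m).continuousOn).mul (g_cont a x s hb α)

lemma D_intable (hb : ∀ j, ∀ t ∈ Set.Icc (0:ℝ) 1, 0 < 1 - t * x * a j) (α : Fin d → ℕ) :
    IntervalIntegrable (Dfun a x s α) MeasureTheory.volume 0 1 := by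
  apply ContinuousOn.intervalIntegrable
  rw [Set.uIcc_of_le (zero_le_one)]
  exact D_cont a x s hb α

lemma Dpw_intable (hb : ∀ j, ∀ t ∈ Set.Icc (0:ℝ) 1, 0 < 1 - t * x * a j) (m : ℕ) (α : Fin d → ℕ) :
    IntervalIntegrable (fun t => Dfun a x s α t * (-((1 - t : ℝ) : ℂ) ^ (m+1) / ((m:ℂ)+1)))
      MeasureTheory.volume 0 1 := by
  apply ContinuousOn.intervalIntegrable
  rw [Set.uIcc_of_le (zero_le_one)]
  exact (D_cont a x s hb α).mul (((pw_cont (m+1)).continuousOn).neg.div_const _)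

lemma g_deriv (hb : ∀ j, ∀ t ∈ Set.Icc (0:ℝ) 1, 0 < 1 - t * x * a j) (α : Fin d → ℕ) (t : ℝ) (ht : t ∈ Set.Icc (0:ℝ) 1) :
    HasDerivAt (gfun a x s α) (Dfun a x s α t) t := by
  have h := prod_hasDerivAt a x (fun j => -s j - (α j : ℕ)) t (fun j => hb j t ht)
  have heq : ∀ k : Fin d,
      Function.update (fun j => -s j - ((α j : ℕ) : ℂ)) k ((-s k - ((α k : ℕ) : ℂ)) - 1)
      = fun j => -s j - (((Function.update α k (α k + 1)) j : ℕ) : ℂ) := by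
    intro k
    funext j
    rcases eq_or_ne j k with rfl | hjk
    · simp only [Function.update_self]
      push_cast
      ring
    · simp only [Function.update_of_ne hjk]
  convert h using 1
  · rfl
  simp only [Dfun]
  apply sum_congr rfl
  intro k _
  rw [heq k]
  rw [gfun]
  push_cast
  ring

lemma int_D (hb : ∀ j, ∀ t ∈ Set.Icc (0:ℝ) 1, 0 < 1 - t * x * a j) (m : ℕ) (α : Fin d → ℕ) :
    (∫ t in (0:ℝ)..1, ((1 - t : ℝ) : ℂ) ^ m * Dfun a x s α t)
      = ∑ k, (x : ℂ) * ((a k : ℂ) * (s k + (α k : ℕ))) *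
          Ifun a x s m (Function.update α k (α k + 1)) := by
  have h1 : (∫ t in (0:ℝ)..1, ((1 - t : ℝ) : ℂ) ^ m * Dfun a x s α t)
      = ∫ t in (0:ℝ)..1, ∑ k, (x : ℂ) * ((a k : ℂ) * (s k + (α k : ℕ))) *
          (((1 - t : ℝ) : ℂ) ^ m * gfun a x s (Function.update α k (α k + 1)) t) := by
    apply intervalIntegral.integral_congr
    intro t _
    simp only [Dfun, Finset.mul_sum]
    exact sum_congr rfl fun k _ => by ring
  rw [h1, intervalIntegral.integral_finset_sum]
  · exact sum_congr rfl fun k _ => by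
      rw [intervalIntegral.integral_const_mul]; rfl
  · intro k _
    exact (gI_intable a x s hb m _).const_mul _

lemma ftc0 (hb : ∀ j, ∀ t ∈ Set.Icc (0:ℝ) 1, 0 < 1 - t * x * a j) :
    gfun a x s 0 1 = 1 + ∫ t in (0:ℝ)..1, Dfun a x s 0 t := by
  have h := intervalIntegral.integral_eq_sub_of_hasDerivAt_of_le zero_le_one
    (g_cont a x s hb 0) (fun t ht => g_deriv a x s hb 0 t (Set.mem_Icc_of_Ioo ht))
    (D_intable a x s hb 0)
  rw [g_zero] at h
  rw [h]
  ring

lemma ibp (hb : ∀ j, ∀ t ∈ Set.Icc (0:ℝ) 1, 0 < 1 - t * x * a j) (n : ℕ) (α : Fin d → ℕ) :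
    Ifun a x s n α = (((n:ℂ)+1))⁻¹ *
      (1 + ∫ t in (0:ℝ)..1, ((1 - t : ℝ) : ℂ) ^ (n+1) * Dfun a x s α t) := by
  have hne : ((n:ℂ)+1) ≠ 0 := Nat.cast_add_one_ne_zero n
  have hv : ∀ t : ℝ, HasDerivAt (fun t : ℝ => -((1 - t : ℝ) : ℂ) ^ (n+1) / ((n:ℂ)+1))
      (((1 - t : ℝ) : ℂ) ^ n) t := by
    intro t
    have hinner : HasDerivAt (fun t : ℝ => ((1 - t : ℝ) : ℂ)) (((-1 : ℝ)) : ℂ) t :=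
      ((hasDerivAt_id t).const_sub 1).ofReal_comp
    have hpow := (hasDerivAt_pow (n+1) (((1 - t : ℝ)) : ℂ)).comp t hinner
    have h2 := (hpow.div_const ((n:ℂ)+1)).neg
    convert h2 using 1
    · rfl
    · funext u; simp [Function.comp]; ring
    · simp only [Nat.add_sub_cancel]
      push_cast
      field_simp
  have hIcc : Set.uIcc (0:ℝ) 1 = Set.Icc 0 1 := Set.uIcc_of_le zero_le_one
  have h := intervalIntegral.integral_mul_deriv_eq_deriv_mul
    (u := gfun a x s α) (u' := Dfun a x s α)
    (v := fun t : ℝ => -((1 - t : ℝ) : ℂ) ^ (n+1) / ((n:ℂ)+1))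
    (v' := fun t : ℝ => ((1 - t : ℝ) : ℂ) ^ n)
    (fun t ht => g_deriv a x s hb α t (hIcc ▸ ht))
    (fun t _ => hv t)
    (D_intable a x s hb α)
    (((pw_cont n).intervalIntegrable 0 1))
  have e1 : (∫ t in (0:ℝ)..1, gfun a x s α t * ((1 - t : ℝ) : ℂ) ^ n) = Ifun a x s n α := by
    rw [Ifun]; exact intervalIntegral.integral_congr fun t _ => mul_comm _ _
  have e2 : (∫ t in (0:ℝ)..1, Dfun a x s α t * (-((1 - t : ℝ) : ℂ) ^ (n+1) / ((n:ℂ)+1)))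
      = -((n:ℂ)+1)⁻¹ * ∫ t in (0:ℝ)..1, ((1 - t : ℝ) : ℂ) ^ (n+1) * Dfun a x s α t := by
    rw [← intervalIntegral.integral_const_mul]
    exact intervalIntegral.integral_congr fun t _ => by ring
  rw [e1, e2, g_zero] at h
  rw [h]
  push_cast
  field_simp
  rw [sub_self, sub_zero, zero_pow (Nat.succ_ne_zero n), one_pow]
  ring
end defs

lemma ibp' {d : ℕ} (a : Fin d → ℝ) (x : ℝ) (s : Fin d → ℂ)
    (hb : ∀ j, ∀ t ∈ Set.Icc (0:ℝ) 1, 0 < 1 - t * x * a j) (n : ℕ) (α : Fin d → ℕ) :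
    ((n:ℂ)+1) * Ifun a x s n α
      = 1 + ∑ k, (x : ℂ) * ((a k : ℂ) * (s k + (α k : ℕ))) *
          Ifun a x s (n+1) (Function.update α k (α k + 1)) := by
  rw [ibp a x s hb n α, int_D a x s hb (n+1) α]
  have hne : ((n:ℂ)+1) ≠ 0 := Nat.cast_add_one_ne_zero n
  field_simp

lemma star_eq {d : ℕ} (a : Fin d → ℝ) (x : ℝ) (s : Fin d → ℂ)
    (hb : ∀ j, ∀ t ∈ Set.Icc (0:ℝ) 1, 0 < 1 - t * x * a j) (n : ℕ) :
    ((n:ℂ)+1) * ∑ α ∈ Finset.Nat.antidiagonalTuple d (n+1),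
        ((∏ j, ((a j : ℂ)) ^ α j) * ∏ j, cbinom (-s j) (α j)) * Ifun a x s n α
      = (∑ α ∈ Finset.Nat.antidiagonalTuple d (n+1),
          (∏ j, ((a j : ℂ)) ^ α j) * ∏ j, cbinom (-s j) (α j))
        + (x:ℂ) * (-(((n+1) + 1 : ℕ) : ℂ) * ∑ β ∈ Finset.Nat.antidiagonalTuple d (n+1+1),
            ((∏ j, ((a j : ℂ)) ^ β j) * ∏ j, cbinom (-s j) (β j)) * Ifun a x s (n+1) β) := by
  rw [← sumkey a s (n+1) (Ifun a x s (n+1))]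
  rw [Finset.mul_sum, Finset.mul_sum, ← Finset.sum_add_distrib]
  apply sum_congr rfl
  intro α _
  have h1 := ibp' a x s hb n α
  calc ((n:ℂ)+1) * (((∏ j, ((a j : ℂ)) ^ α j) * ∏ j, cbinom (-s j) (α j)) * Ifun a x s n α)
      = ((∏ j, ((a j : ℂ)) ^ α j) * ∏ j, cbinom (-s j) (α j)) * (((n:ℂ)+1) * Ifun a x s n α) := by
        ring
    _ = ((∏ j, ((a j : ℂ)) ^ α j) * ∏ j, cbinom (-s j) (α j)) *
          (1 + ∑ k, (x : ℂ) * ((a k : ℂ) * (s k + (α k : ℕ))) *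
            Ifun a x s (n+1) (Function.update α k (α k + 1))) := by rw [h1]
    _ = _ := by
        rw [mul_add, mul_one]
        congr 1
        rw [Finset.mul_sum, Finset.mul_sum]
        exact sum_congr rfl fun k _ => by ring

lemma base_eq {d : ℕ} (a : Fin d → ℝ) (x : ℝ) (s : Fin d → ℂ)
    (hb : ∀ j, ∀ t ∈ Set.Icc (0:ℝ) 1, 0 < 1 - t * x * a j) :
    ∏ j, (((1 - x * a j : ℝ) : ℂ)) ^ (-s j)
      = 1 + (x:ℂ) * (-((0 + 1 : ℕ) : ℂ) * ∑ β ∈ Finset.Nat.antidiagonalTuple d (0+1),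
          ((∏ j, ((a j : ℂ)) ^ β j) * ∏ j, cbinom (-s j) (β j)) * Ifun a x s 0 β) := by
  have h0 : ∏ j, (((1 - x * a j : ℝ) : ℂ)) ^ (-s j) = gfun a x s 0 1 := by
    simp [gfun]
  rw [h0, ftc0 a x s hb]
  congr 1
  have e0 : (∫ t in (0:ℝ)..1, Dfun a x s 0 t)
      = ∫ t in (0:ℝ)..1, ((1 - t : ℝ) : ℂ) ^ 0 * Dfun a x s 0 t :=
    intervalIntegral.integral_congr fun t _ => by simp
  rw [e0, int_D a x s hb 0 0]
  rw [← sumkey a s 0 (Ifun a x s 0)]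
  rw [Finset.Nat.antidiagonalTuple_zero_right, Finset.sum_singleton]
  rw [Finset.mul_sum]
  apply sum_congr rfl
  intro k _
  simp only [Pi.zero_apply, Nat.cast_zero, pow_zero, prod_const_one, cbinom_zero, one_mul]
  ring

lemma main_identity {d : ℕ} (a : Fin d → ℝ) (s : Fin d → ℂ) (x : ℝ)
    (hb : ∀ j, ∀ t ∈ Set.Icc (0:ℝ) 1, 0 < 1 - t * x * a j) (n : ℕ) :
    ∏ j, (((1 - x * a j : ℝ) : ℂ)) ^ (-s j) =
      (∑ ℓ ∈ range (n + 1), ((-1:ℂ)^ℓ * ∑ α ∈ Finset.Nat.antidiagonalTuple d ℓ,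
        (∏ j, ((a j : ℂ)) ^ α j) * ∏ j, cbinom (-s j) (α j)) * (x:ℂ)^ℓ)
      + (x:ℂ)^(n+1) * ((-1:ℂ)^(n+1) * ((n:ℂ)+1) * ∑ α ∈ Finset.Nat.antidiagonalTuple d (n+1),
          ((∏ j, ((a j : ℂ)) ^ α j) * ∏ j, cbinom (-s j) (α j)) * Ifun a x s n α) := by
  induction n with
  | zero =>
      have hbase := base_eq a x s hb
      rw [Finset.sum_range_one]
      have hc0 : ((-1:ℂ)^0 * ∑ α ∈ Finset.Nat.antidiagonalTuple d 0,
          (∏ j, ((a j : ℂ)) ^ α j) * ∏ j, cbinom (-s j) (α j)) * (x:ℂ)^0 = 1 := by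
        rw [Finset.Nat.antidiagonalTuple_zero_right, Finset.sum_singleton]
        simp [cbinom_zero]
      rw [hc0, hbase]
      push_cast
      ring
  | succ n ih =>
      rw [Finset.sum_range_succ, ih]
      have hstar := star_eq a x s hb n
      push_cast at hstar ⊢
      linear_combination ((x:ℂ)^(n+1) * (-1:ℂ)^(n+1)) * hstar


lemma cpow_bound {b : ℝ} (hb1 : (1:ℝ)/2 ≤ b) (hb2 : b ≤ 3/2) {w : ℂ} {r : ℝ}
    (hw : |w.re| ≤ r) : ‖((b : ℝ) : ℂ) ^ w‖ ≤ (2:ℝ) ^ r := by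
  have hbpos : (0:ℝ) < b := by linarith
  rw [Complex.norm_cpow_eq_rpow_re_of_pos hbpos]
  rcases le_or_gt 0 w.re with h | h
  · calc b ^ w.re ≤ (2:ℝ) ^ w.re := Real.rpow_le_rpow hbpos.le (by linarith) h
      _ ≤ (2:ℝ) ^ r := Real.rpow_le_rpow_of_exponent_le one_le_two
        (le_trans (le_abs_self _) hw)
  · calc b ^ w.re ≤ ((1:ℝ)/2) ^ w.re :=
        Real.rpow_le_rpow_of_nonpos (by norm_num) hb1 h.le
      _ = (2:ℝ) ^ (-w.re) := by
          rw [one_div, Real.inv_rpow (by norm_num : (0:ℝ) ≤ 2),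
            ← Real.rpow_neg (by norm_num : (0:ℝ) ≤ 2)]
      _ ≤ (2:ℝ) ^ r := Real.rpow_le_rpow_of_exponent_le one_le_two
        (le_trans (neg_le_abs _) hw)

lemma rho_bound {d : ℕ} (a : Fin d → ℝ) (N : ℕ) (M : ℝ) (hM : 0 ≤ M) (s : Fin d → ℂ)
    (hs : ∀ j, ‖s j‖ ≤ M) (x : ℝ)
    (hb : ∀ j, ∀ t ∈ Set.Icc (0:ℝ) 1, (1:ℝ)/2 ≤ 1 - t * x * a j ∧ 1 - t * x * a j ≤ 3/2)
    (A1 : ℝ) (hA1 : 1 ≤ A1) (haA : ∀ j, |a j| ≤ A1) :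
    ‖(-1:ℂ) ^ (N + 1) * (((N:ℂ)) + 1) * ∑ α ∈ Finset.Nat.antidiagonalTuple d (N + 1),
        ((∏ j, ((a j : ℂ)) ^ α j) * ∏ j, cbinom (-s j) (α j)) *
          ∫ t in (0 : ℝ)..1, ((1 - t : ℝ) : ℂ) ^ N *
            ∏ j, (((1 - t * x * a j : ℝ) : ℂ)) ^ (-s j - (α j : ℕ))‖
      ≤ ((N:ℝ) + 1) * (Finset.Nat.antidiagonalTuple d (N + 1)).card *
          (A1 ^ (N + 1) * (M + N + 2) ^ (N + 1) * ((2:ℝ) ^ (M + (N:ℝ) + 1)) ^ d) := by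
  set T : ℝ := A1 ^ (N + 1) * (M + N + 2) ^ (N + 1) * ((2:ℝ) ^ (M + (N:ℝ) + 1)) ^ d with hT
  have hE1 : (0:ℝ) ≤ (2:ℝ) ^ (M + (N:ℝ) + 1) := Real.rpow_nonneg (by norm_num) _
  have hMN2 : (0:ℝ) ≤ M + N + 2 := by positivity
  -- bound on each term of the sum
  have hterm : ∀ α ∈ Finset.Nat.antidiagonalTuple d (N + 1),
      ‖((∏ j, ((a j : ℂ)) ^ α j) * ∏ j, cbinom (-s j) (α j)) *
          ∫ t in (0 : ℝ)..1, ((1 - t : ℝ) : ℂ) ^ N *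
            ∏ j, (((1 - t * x * a j : ℝ) : ℂ)) ^ (-s j - (α j : ℕ))‖ ≤ T := by
    intro α hα
    rw [Finset.Nat.mem_antidiagonalTuple] at hα
    have hαle : ∀ j, α j ≤ N + 1 := fun j => hα ▸ Finset.single_le_sum
      (fun i _ => Nat.zero_le (α i)) (mem_univ j)
    have T1 : ‖∏ j, ((a j : ℂ)) ^ α j‖ ≤ A1 ^ (N + 1) := by
      rw [norm_prod]
      calc ∏ j, ‖((a j : ℂ)) ^ α j‖ ≤ ∏ j, A1 ^ α j := by
            apply Finset.prod_le_prod (fun j _ => norm_nonneg _)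
            intro j _
            rw [norm_pow, Complex.norm_real]
            exact pow_le_pow_left₀ (abs_nonneg _) (haA j) _
        _ = A1 ^ (N + 1) := by rw [Finset.prod_pow_eq_pow_sum, hα]
    have T2 : ‖∏ j, cbinom (-s j) (α j)‖ ≤ (M + N + 2) ^ (N + 1) := by
      rw [norm_prod]
      calc ∏ j, ‖cbinom (-s j) (α j)‖ ≤ ∏ j, (M + N + 2) ^ α j := by
            apply Finset.prod_le_prod (fun j _ => norm_nonneg _)
            intro j _
            calc ‖cbinom (-s j) (α j)‖ ≤ (‖-s j‖ + α j) ^ α j := cbinom_norm_le _ _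
              _ ≤ (M + N + 2) ^ α j := by
                  apply pow_le_pow_left₀ (by positivity)
                  rw [norm_neg]
                  have h1 := hs j
                  have h2 : (α j : ℝ) ≤ (N:ℝ) + 1 := by exact_mod_cast hαle j
                  linarith
        _ = (M + N + 2) ^ (N + 1) := by rw [Finset.prod_pow_eq_pow_sum, hα]
    have T3 : ‖∫ t in (0 : ℝ)..1, ((1 - t : ℝ) : ℂ) ^ N *
        ∏ j, (((1 - t * x * a j : ℝ) : ℂ)) ^ (-s j - (α j : ℕ))‖
        ≤ ((2:ℝ) ^ (M + (N:ℝ) + 1)) ^ d := by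
      have := intervalIntegral.norm_integral_le_of_norm_le_const
        (C := ((2:ℝ) ^ (M + (N:ℝ) + 1)) ^ d)
        (f := fun t => ((1 - t : ℝ) : ℂ) ^ N *
          ∏ j, (((1 - t * x * a j : ℝ) : ℂ)) ^ (-s j - (α j : ℕ)))
        (a := 0) (b := 1) ?_
      · simpa using this
      · intro t ht
        rw [Set.uIoc_of_le zero_le_one] at ht
        have htI : t ∈ Set.Icc (0:ℝ) 1 := ⟨ht.1.le, ht.2⟩
        rw [norm_mul]
        have h1 : ‖((1 - t : ℝ) : ℂ) ^ N‖ ≤ 1 := by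
          rw [norm_pow, Complex.norm_real]
          apply pow_le_one₀ (norm_nonneg _)
          rw [Real.norm_eq_abs, abs_le]
          constructor <;> [linarith [htI.2]; linarith [htI.1]]
        have h2 : ‖∏ j, (((1 - t * x * a j : ℝ) : ℂ)) ^ (-s j - (α j : ℕ))‖
            ≤ ((2:ℝ) ^ (M + (N:ℝ) + 1)) ^ d := by
          rw [norm_prod]
          calc ∏ j, ‖(((1 - t * x * a j : ℝ) : ℂ)) ^ (-s j - (α j : ℕ))‖
              ≤ ∏ _j : Fin d, (2:ℝ) ^ (M + (N:ℝ) + 1) := by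
                apply Finset.prod_le_prod (fun j _ => norm_nonneg _)
                intro j _
                apply cpow_bound (hb j t htI).1 (hb j t htI).2
                have hre : |(-s j - ((α j : ℕ) : ℂ)).re| ≤ ‖s j‖ + α j := by
                  have : (-s j - ((α j : ℕ) : ℂ)).re = -(s j).re - (α j : ℝ) := by
                    simp [Complex.sub_re, Complex.neg_re]
                  rw [this, abs_le]
                  have := Complex.abs_re_le_norm (s j)
                  have h0 : (0:ℝ) ≤ (α j : ℝ) := Nat.cast_nonneg _
                  constructor <;> cases' abs_le.1 this with hl hr <;> linarith
                have h2' : (α j : ℝ) ≤ (N:ℝ) + 1 := by exact_mod_cast hαle j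
                have := hs j
                linarith
            _ = ((2:ℝ) ^ (M + (N:ℝ) + 1)) ^ d := by
                rw [Finset.prod_const, Finset.card_univ, Fintype.card_fin]
        calc ‖((1 - t : ℝ) : ℂ) ^ N‖ * ‖∏ j, (((1 - t * x * a j : ℝ) : ℂ)) ^ (-s j - (α j : ℕ))‖
            ≤ 1 * (((2:ℝ) ^ (M + (N:ℝ) + 1)) ^ d) :=
              mul_le_mul h1 h2 (norm_nonneg _) zero_le_one
          _ = _ := one_mul _
    rw [norm_mul, norm_mul]
    calc ‖∏ j, ((a j : ℂ)) ^ α j‖ * ‖∏ j, cbinom (-s j) (α j)‖ * ‖_‖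
        ≤ (A1 ^ (N + 1) * (M + N + 2) ^ (N + 1)) * (((2:ℝ) ^ (M + (N:ℝ) + 1)) ^ d) := by
          apply mul_le_mul _ T3 (norm_nonneg _) (by positivity)
          exact mul_le_mul T1 T2 (norm_nonneg _) (by positivity)
      _ = T := by rw [hT]
  -- assemble
  rw [norm_mul, norm_mul]
  have hn1 : ‖(-1:ℂ) ^ (N + 1)‖ = 1 := by
    rw [norm_pow, norm_neg, norm_one, one_pow]
  have hn2 : ‖((N:ℂ)) + 1‖ = (N:ℝ) + 1 := by
    have : ((N:ℂ)) + 1 = ((N + 1 : ℕ) : ℂ) := by push_cast; ring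
    rw [this, Complex.norm_natCast]
    push_cast; ring
  rw [hn1, hn2, one_mul]
  have hsum : ‖∑ α ∈ Finset.Nat.antidiagonalTuple d (N + 1),
      ((∏ j, ((a j : ℂ)) ^ α j) * ∏ j, cbinom (-s j) (α j)) *
        ∫ t in (0 : ℝ)..1, ((1 - t : ℝ) : ℂ) ^ N *
          ∏ j, (((1 - t * x * a j : ℝ) : ℂ)) ^ (-s j - (α j : ℕ))‖
      ≤ (Finset.Nat.antidiagonalTuple d (N + 1)).card * T := by
    calc ‖∑ α ∈ Finset.Nat.antidiagonalTuple d (N + 1), _‖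
        ≤ ∑ α ∈ Finset.Nat.antidiagonalTuple d (N + 1),
          ‖((∏ j, ((a j : ℂ)) ^ α j) * ∏ j, cbinom (-s j) (α j)) *
            ∫ t in (0 : ℝ)..1, ((1 - t : ℝ) : ℂ) ^ N *
              ∏ j, (((1 - t * x * a j : ℝ) : ℂ)) ^ (-s j - (α j : ℕ))‖ := norm_sum_le _ _
      _ ≤ (Finset.Nat.antidiagonalTuple d (N + 1)).card * T := by
          rw [← nsmul_eq_mul]
          exact Finset.sum_le_card_nsmul _ _ _ hterm
  calc ((N:ℝ) + 1) * ‖_‖ ≤ ((N:ℝ) + 1) * ((Finset.Nat.antidiagonalTuple d (N + 1)).card * T) := by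
        apply mul_le_mul_of_nonneg_left hsum (by positivity)
    _ = _ := by rw [hT]; ring


theorem taylor_with_remainder (d : ℕ) (hd : 1 ≤ d) (a : Fin d → ℝ) (ha : a ≠ 0)
    (δ : ℝ) (hδ : δ = (2 * ⨆ j, |a j|)⁻¹) (N : ℕ)
    (c : ℕ → (Fin d → ℂ) → ℂ)
    (hc : ∀ (ℓ : ℕ) (s : Fin d → ℂ), c ℓ s =
      (-1) ^ ℓ * ∑ α ∈ Finset.Nat.antidiagonalTuple d ℓ,
        (∏ j, ((a j : ℂ)) ^ α j) * ∏ j, cbinom (-s j) (α j))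
    (ρ : ℝ → (Fin d → ℂ) → ℂ)
    (hρ : ∀ (x : ℝ) (s : Fin d → ℂ), ρ x s =
      (-1) ^ (N + 1) * (N + 1) * ∑ α ∈ Finset.Nat.antidiagonalTuple d (N + 1),
        ((∏ j, ((a j : ℂ)) ^ α j) * ∏ j, cbinom (-s j) (α j)) *
          ∫ t in (0 : ℝ)..1, ((1 - t : ℝ) : ℂ) ^ N *
            ∏ j, (((1 - t * x * a j : ℝ) : ℂ)) ^ (-s j - α j)) :
    (∀ (s : Fin d → ℂ) (x : ℝ), x ∈ Set.Icc (-δ) δ →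
      ∏ j, (((1 - x * a j : ℝ) : ℂ)) ^ (-s j) =
        (∑ ℓ ∈ range (N + 1), c ℓ s * (x : ℂ) ^ ℓ) + (x : ℂ) ^ (N + 1) * ρ x s) ∧
    (∀ Kc : Set (Fin d → ℂ), IsCompact Kc →
      ∃ C : ℝ, 0 < C ∧ ∀ s ∈ Kc, ∀ x ∈ Set.Icc (-δ) δ, ‖ρ x s‖ ≤ C) := by
  classical
  have hne : Nonempty (Fin d) := Fin.pos_iff_nonempty.mp (by omega)
  set A : ℝ := ⨆ j, |a j| with hA
  have hbdd : BddAbove (Set.range fun j => |a j|) := Set.Finite.bddAbove (Set.finite_range _)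
  have haj : ∀ j, |a j| ≤ A := fun j => le_ciSup hbdd j
  have hApos : 0 < A := by
    obtain ⟨j, hj⟩ := Function.ne_iff.1 ha
    exact lt_of_lt_of_le (abs_pos.2 hj) (haj j)
  have hδpos : 0 < δ := by rw [hδ]; positivity
  have hδA : δ * A = 1/2 := by
    rw [hδ]
    field_simp
  -- For x in the interval, get the base bounds
  have hbase : ∀ x ∈ Set.Icc (-δ) δ, ∀ j, ∀ t ∈ Set.Icc (0:ℝ) 1,
      (1:ℝ)/2 ≤ 1 - t * x * a j ∧ 1 - t * x * a j ≤ 3/2 := by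
    intro x hx j t ht
    have hxabs : |x| ≤ δ := abs_le.2 ⟨hx.1, hx.2⟩
    have h1 : |t * x * a j| ≤ 1/2 := by
      rw [abs_mul, abs_mul]
      calc |t| * |x| * |a j| ≤ 1 * δ * A := by
            apply mul_le_mul _ (haj j) (abs_nonneg _) (by positivity)
            apply mul_le_mul _ hxabs (abs_nonneg _) zero_le_one
            rw [abs_le]; exact ⟨by linarith [ht.1], ht.2⟩
        _ = 1/2 := by rw [one_mul, hδA]
    rw [abs_le] at h1
    constructor <;> linarith [h1.1, h1.2]
  have hb : ∀ x ∈ Set.Icc (-δ) δ, ∀ j, ∀ t ∈ Set.Icc (0:ℝ) 1, 0 < 1 - t * x * a j := by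
    intro x hx j t ht
    linarith [(hbase x hx j t ht).1]
  constructor
  · intro s x hx
    have hmain := main_identity a s x (fun j t ht => hb x hx j t ht) N
    rw [hρ x s]
    simp only [hc]
    simpa only [Ifun, gfun] using hmain
  · intro Kc hKc
    obtain ⟨M₀, hM₀⟩ := hKc.exists_bound_of_continuousOn continuousOn_id
    set M : ℝ := max M₀ 0 with hM
    have hMnn : 0 ≤ M := le_max_right _ _
    set A1 : ℝ := max A 1 with hA1
    have hA1ge : 1 ≤ A1 := le_max_right _ _
    have haA1 : ∀ j, |a j| ≤ A1 := fun j => le_trans (haj j) (le_max_left _ _)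
    refine ⟨((N:ℝ) + 1) * (Finset.Nat.antidiagonalTuple d (N + 1)).card *
        (A1 ^ (N + 1) * (M + N + 2) ^ (N + 1) * ((2:ℝ) ^ (M + (N:ℝ) + 1)) ^ d) + 1, ?_, ?_⟩
    · have h0 : (0:ℝ) ≤ ((N:ℝ) + 1) * (Finset.Nat.antidiagonalTuple d (N + 1)).card *
          (A1 ^ (N + 1) * (M + N + 2) ^ (N + 1) * ((2:ℝ) ^ (M + (N:ℝ) + 1)) ^ d) := by
        have : (0:ℝ) ≤ (2:ℝ) ^ (M + (N:ℝ) + 1) := Real.rpow_nonneg (by norm_num) _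
        positivity
      linarith
    · intro s hs x hx
      rw [hρ x s]
      have hsj : ∀ j, ‖s j‖ ≤ M := by
        intro j
        calc ‖s j‖ ≤ ‖s‖ := norm_le_pi_norm s j
          _ ≤ M₀ := hM₀ s hs
          _ ≤ M := le_max_left _ _
      have hbd := rho_bound a N M hMnn s hsj x (fun j t ht => hbase x hx j t ht) A1 hA1ge haA1
      calc ‖(-1:ℂ) ^ (N + 1) * ((N:ℂ) + 1) * ∑ α ∈ Finset.Nat.antidiagonalTuple d (N + 1),
            ((∏ j, ((a j : ℂ)) ^ α j) * ∏ j, cbinom (-s j) (α j)) *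
              ∫ t in (0 : ℝ)..1, ((1 - t : ℝ) : ℂ) ^ N *
                ∏ j, (((1 - t * x * a j : ℝ) : ℂ)) ^ (-s j - (α j : ℕ))‖
          ≤ ((N:ℝ) + 1) * (Finset.Nat.antidiagonalTuple d (N + 1)).card *
            (A1 ^ (N + 1) * (M + N + 2) ^ (N + 1) * ((2:ℝ) ^ (M + (N:ℝ) + 1)) ^ d) := hbd
        _ ≤ _ := by linarith
end
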